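/- Let A, B be (n-1)×(n-1) real matrices. If there exist an invertible (n-1)×(n-1) matrix P and a nonzero real constant c with B = c P⁻¹ A P, then the almost abelian Lie algebras 𝔤_A and 𝔤_B are isomorphic as Lie algebras. -/

import Mathlib

/-- If `B = c P⁻¹ A P` with `P` invertible and `c ≠ 0`, then the almost abelian
Lie algebras `𝔤_A` and `𝔤_B` are isomorphic: there is a linear equivalence
intertwining the brackets. -/
theorem stmt_9 (m : ℕ) (A B P : Matrix (Fin m) (Fin m) ℝ)
    (hP : IsUnit P) (c : ℝ) (hc : c ≠ 0)
    (hB : B = c • (P⁻¹ * A * P))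
    (brA brB : ((Fin m → ℝ) × ℝ) → ((Fin m → ℝ) × ℝ) → ((Fin m → ℝ) × ℝ))
    (hbrA : ∀ x y, brA x y = (x.2 • A.mulVec y.1 - y.2 • A.mulVec x.1, 0))
    (hbrB : ∀ x y, brB x y = (x.2 • B.mulVec y.1 - y.2 • B.mulVec x.1, 0)) :
    ∃ e : ((Fin m → ℝ) × ℝ) ≃ₗ[ℝ] ((Fin m → ℝ) × ℝ),
      ∀ x y, e (brA x y) = brB (e x) (e y) := by
  have hdet : IsUnit P.det := (Matrix.isUnit_iff_isUnit_det P).mp hP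
  have h1 : P⁻¹ * P = 1 := Matrix.nonsing_inv_mul P hdet
  have h2 : P * P⁻¹ = 1 := Matrix.mul_nonsing_inv P hdet
  let e₁ : (Fin m → ℝ) ≃ₗ[ℝ] (Fin m → ℝ) :=
    LinearEquiv.ofLinear (Matrix.mulVecLin P⁻¹) (Matrix.mulVecLin P)
      (by rw [← Matrix.mulVecLin_mul, h1, Matrix.mulVecLin_one])
      (by rw [← Matrix.mulVecLin_mul, h2, Matrix.mulVecLin_one])
  let e₂ : ℝ ≃ₗ[ℝ] ℝ := LinearEquiv.smulOfNeZero ℝ ℝ c⁻¹ (inv_ne_zero hc)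
  refine ⟨e₁.prodCongr e₂, fun x y => ?_⟩
  have key : ∀ v : Fin m → ℝ, B.mulVec (P⁻¹.mulVec v) = c • P⁻¹.mulVec (A.mulVec v) := by
    intro v
    rw [hB, Matrix.smul_mulVec, Matrix.mulVec_mulVec, Matrix.mul_assoc, h2,
      Matrix.mul_one, ← Matrix.mulVec_mulVec]
  simp only [hbrA, hbrB, LinearEquiv.prodCongr_apply, LinearEquiv.ofLinear_apply,
    LinearEquiv.smulOfNeZero_apply, e₁, e₂, Matrix.mulVecLin_apply, Prod.mk.injEq,
    smul_eq_mul, key]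
  constructor
  · rw [Matrix.mulVec_sub]
    simp only [Matrix.mulVec_smul, smul_smul]
    congr 2 <;> field_simp
  · simp
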